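/- Let d ≥ 2 and 1 ≤ p < ∞. There exists a constant N depending only on p such that the following holds. Let B' ⊆ ℝ^{d−1} be measurable, ψ : B' → (0,∞) be measurable, and Ω = {(y', y^d) ∈ ℝ^d : y' ∈ B', 0 < y^d < ψ(y')}. Then for every measurable F : ℝ^d → ℝ with ‖F‖_{L_p(Ω)} < ∞, the function W(y', y^d) := ∫_0^{y^d} F(y', t)/(ψ(y') − t) dt satisfies ‖W‖_{L_p(Ω)} ≤ N ‖F‖_{L_p(Ω)}. -/

import Mathlib

open MeasureTheory

open Set intervalIntegral
open scoped ENNReal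

lemma swap_helper {k g : ℝ → ℝ≥0∞} (hk : Measurable k) (hg : Measurable g) (b : ℝ) :
    ∫⁻ s in Ioo (0:ℝ) b, k s * ∫⁻ t in Ioo (0:ℝ) s, g t
      = ∫⁻ t in Ioo (0:ℝ) b, g t * ∫⁻ s in Ioo t b, k s := by
  set S : Set (ℝ × ℝ) := {z | 0 < z.2 ∧ z.2 < z.1 ∧ z.1 < b} with hSdef
  have hS : MeasurableSet S := by
    apply MeasurableSet.inter (measurableSet_lt measurable_const measurable_snd)
    exact MeasurableSet.inter (measurableSet_lt measurable_snd measurable_fst)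
      (measurableSet_lt measurable_fst measurable_const)
  set F : ℝ → ℝ → ℝ≥0∞ := fun s t => S.indicator (fun z => k z.1 * g z.2) (s, t) with hF
  have hFm : Measurable (Function.uncurry F) := by
    have : Function.uncurry F = S.indicator (fun z => k z.1 * g z.2) := by
      ext z; simp [Function.uncurry, hF]
    rw [this]
    exact ((hk.comp measurable_fst).mul (hg.comp measurable_snd)).indicator hS
  have hL : ∫⁻ s in Ioo (0:ℝ) b, k s * ∫⁻ t in Ioo (0:ℝ) s, g t = ∫⁻ s, ∫⁻ t, F s t := by
    rw [← lintegral_indicator measurableSet_Ioo _]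
    congr 1; ext s
    by_cases hs : s ∈ Ioo (0:ℝ) b
    · rw [indicator_of_mem hs, ← lintegral_indicator measurableSet_Ioo _,
        ← lintegral_const_mul _ (hg.indicator measurableSet_Ioo)]
      congr 1; ext t
      by_cases ht : t ∈ Ioo (0:ℝ) s
      · have : (s, t) ∈ S := ⟨ht.1, ht.2, hs.2⟩
        simp [hF, indicator_of_mem this, indicator_of_mem ht]
      · have : (s, t) ∉ S := by
          intro h; exact ht ⟨h.1, h.2.1⟩
        simp [hF, indicator_of_notMem this, indicator_of_notMem ht]
    · rw [indicator_of_notMem hs]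
      have : ∀ t, F s t = 0 := fun t => indicator_of_notMem
        (fun h => hs ⟨lt_trans h.1 h.2.1, h.2.2⟩) _
      simp [this]
  have hR : ∫⁻ t in Ioo (0:ℝ) b, g t * ∫⁻ s in Ioo t b, k s = ∫⁻ t, ∫⁻ s, F s t := by
    rw [← lintegral_indicator measurableSet_Ioo _]
    congr 1; ext t
    by_cases ht : t ∈ Ioo (0:ℝ) b
    · rw [indicator_of_mem ht, ← lintegral_indicator measurableSet_Ioo _,
        ← lintegral_const_mul _ (hk.indicator measurableSet_Ioo)]
      congr 1; ext s
      by_cases hs : s ∈ Ioo t b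
      · have : (s, t) ∈ S := ⟨ht.1, hs.1, hs.2⟩
        rw [mul_comm]
        simp [hF, indicator_of_mem this, indicator_of_mem hs]
      · have : (s, t) ∉ S := by
          intro h; exact hs ⟨h.2.1, h.2.2⟩
        simp [hF, indicator_of_notMem this, indicator_of_notMem hs]
    · rw [indicator_of_notMem ht]
      have : ∀ s, F s t = 0 := fun s => indicator_of_notMem
        (fun h => ht ⟨h.1, lt_trans h.2.1 h.2.2⟩) _
      simp [this]
  rw [hL, hR]
  exact lintegral_lintegral_swap hFm.aemeasurable


lemma calc1 {t b : ℝ} (ht : 0 ≤ t) (htb : t < b) :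
    ∫⁻ s in Ioo t b, ENNReal.ofReal (b - s) ^ (-(1/2) : ℝ)
      = ENNReal.ofReal (2 * (b - t) ^ ((1/2) : ℝ)) := by
  have hint : IntegrableOn (fun s : ℝ => (b - s) ^ (-(1/2) : ℝ)) (Ioo t b) := by
    have h1 : IntervalIntegrable (fun x : ℝ => x ^ (-(1/2) : ℝ)) volume 0 (b - t) :=
      intervalIntegrable_rpow' (by norm_num)
    have h2 := (h1.comp_sub_left b).symm
    simp only [sub_zero, sub_sub_cancel] at h2
    rw [intervalIntegrable_iff_integrableOn_Ioc_of_le htb.le] at h2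
    exact h2.mono_set Ioo_subset_Ioc_self
  have hcong : ∫⁻ s in Ioo t b, ENNReal.ofReal (b - s) ^ (-(1/2) : ℝ)
      = ∫⁻ s in Ioo t b, ENNReal.ofReal ((b - s) ^ (-(1/2) : ℝ)) := by
    refine setLIntegral_congr_fun measurableSet_Ioo (fun s hs => ?_)
    rw [← ENNReal.ofReal_rpow_of_pos (by linarith [hs.2])]
  rw [hcong, ← ofReal_integral_eq_lintegral_ofReal hint
    ((ae_restrict_iff' measurableSet_Ioo).2 (Filter.Eventually.of_forall fun s hs =>
      Real.rpow_nonneg (by linarith [hs.2]) _))]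
  congr 1
  rw [← integral_Ioc_eq_integral_Ioo, ← intervalIntegral.integral_of_le htb.le]
  rw [show (fun s : ℝ => (b - s) ^ (-(1/2) : ℝ)) = fun s : ℝ => ((b - s) ^ (-(1/2) : ℝ)) from rfl]
  rw [integral_comp_sub_left (fun x : ℝ => x ^ (-(1/2) : ℝ)) b]
  rw [sub_self]
  rw [integral_rpow (Or.inl (by norm_num))]
  rw [Real.zero_rpow (by norm_num)]
  norm_num
  rw [div_eq_mul_inv]
  ring

lemma calc2 {s b δ : ℝ} (hs : 0 < s) (hsb : s < b) (hδ : 0 < δ) :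
    ∫⁻ t in Ioo (0:ℝ) s, ENNReal.ofReal (b - t) ^ (-(1 + δ) : ℝ)
      ≤ ENNReal.ofReal (δ⁻¹ * (b - s) ^ (-δ : ℝ)) := by
  have hbs : 0 < b - s := by linarith
  have hb : 0 < b := by linarith
  have h0 : (0:ℝ) ∉ Set.uIcc (b - s) b := Set.notMem_uIcc_of_lt hbs hb
  have hint : IntegrableOn (fun t : ℝ => (b - t) ^ (-(1 + δ) : ℝ)) (Ioo 0 s) := by
    have h1 : IntervalIntegrable (fun x : ℝ => x ^ (-(1 + δ) : ℝ)) volume (b - s) b :=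
      intervalIntegrable_rpow (Or.inr h0)
    have h2 := (h1.comp_sub_left b).symm
    simp only [sub_sub_cancel, sub_self] at h2
    rw [intervalIntegrable_iff_integrableOn_Ioc_of_le hs.le] at h2
    exact h2.mono_set Ioo_subset_Ioc_self
  have hcong : ∫⁻ t in Ioo (0:ℝ) s, ENNReal.ofReal (b - t) ^ (-(1 + δ) : ℝ)
      = ∫⁻ t in Ioo (0:ℝ) s, ENNReal.ofReal ((b - t) ^ (-(1 + δ) : ℝ)) := by
    refine setLIntegral_congr_fun measurableSet_Ioo (fun x hx => ?_)
    rw [← ENNReal.ofReal_rpow_of_pos (by linarith [hx.2])]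
  rw [hcong, ← ofReal_integral_eq_lintegral_ofReal hint
    ((ae_restrict_iff' measurableSet_Ioo).2 (Filter.Eventually.of_forall fun x hx =>
      Real.rpow_nonneg (by linarith [hx.2]) _))]
  apply ENNReal.ofReal_le_ofReal
  rw [← integral_Ioc_eq_integral_Ioo, ← intervalIntegral.integral_of_le hs.le]
  rw [integral_comp_sub_left (fun x : ℝ => x ^ (-(1 + δ) : ℝ)) b]
  rw [sub_zero]
  rw [integral_rpow (Or.inr ⟨by intro h; rw [neg_eq_iff_eq_neg] at h; linarith, h0⟩)]
  have he : -(1 + δ) + 1 = -δ := by ring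
  rw [he]
  have hb1 : (0:ℝ) ≤ b ^ (-δ : ℝ) := Real.rpow_nonneg hb.le _
  have : (b ^ (-δ:ℝ) - (b - s) ^ (-δ:ℝ)) / (-δ) = ((b - s) ^ (-δ:ℝ) - b ^ (-δ:ℝ)) / δ := by
    rw [div_neg, ← neg_div, neg_sub]
  rw [this, div_eq_inv_mul]
  have : (b - s) ^ (-δ:ℝ) - b ^ (-δ:ℝ) ≤ (b - s) ^ (-δ:ℝ) := by linarith
  exact mul_le_mul_of_nonneg_left this (inv_nonneg.2 hδ.le)

lemma hardy_one {b : ℝ} (f : ℝ → ℝ≥0∞) (hf : Measurable f) :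
    ∫⁻ s in Ioo (0:ℝ) b, (∫⁻ t in Ioo (0:ℝ) s, f t / ENNReal.ofReal (b - t))
      ≤ ∫⁻ t in Ioo (0:ℝ) b, f t := by
  have hc : Measurable fun t : ℝ => ENNReal.ofReal (b - t) :=
    (measurable_const.sub measurable_id).ennreal_ofReal
  have hg : Measurable fun t : ℝ => f t / ENNReal.ofReal (b - t) := hf.div hc
  have h := swap_helper (k := fun _ => (1:ℝ≥0∞))
    (g := fun t => f t / ENNReal.ofReal (b - t)) measurable_const hg b
  simp only [one_mul] at h
  rw [h]
  have : ∀ t ∈ Ioo (0:ℝ) b,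
      (f t / ENNReal.ofReal (b - t)) * ∫⁻ _ in Ioo t b, (1:ℝ≥0∞) = f t := by
    intro t ht
    rw [setLIntegral_one, Real.volume_Ioo]
    have h1 : ENNReal.ofReal (b - t) ≠ 0 := by
      simp only [ne_eq, ENNReal.ofReal_eq_zero, not_le]; linarith [ht.2]
    exact ENNReal.div_mul_cancel h1 ENNReal.ofReal_ne_top
  rw [setLIntegral_congr_fun measurableSet_Ioo this]

lemma hardy_gt {p q : ℝ} (hpq : p.HolderConjugate q) {b : ℝ} (hb : 0 < b)
    (f : ℝ → ℝ≥0∞) (hf : Measurable f) :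
    ∫⁻ s in Ioo (0:ℝ) b, (∫⁻ t in Ioo (0:ℝ) s, f t / ENNReal.ofReal (b - t)) ^ p
      ≤ ENNReal.ofReal (2 * (2 * p / q) ^ (p / q)) * ∫⁻ t in Ioo (0:ℝ) b, f t ^ p := by
  have hp0 : (0:ℝ) < p := hpq.pos
  have hq0 : (0:ℝ) < q := hpq.symm.pos
  set c : ℝ → ℝ≥0∞ := fun t => ENNReal.ofReal (b - t) with hc_def
  have hc : Measurable c := (measurable_const.sub measurable_id).ennreal_ofReal
  set δ : ℝ := q / (2 * p) with hδ_def
  have hδ : 0 < δ := by positivity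
  set A : ℝ → ℝ≥0∞ := fun t => f t * c t ^ (-(1 / (2 * p))) with hA_def
  set B : ℝ → ℝ≥0∞ := fun t => c t ^ (-(1 / q) - 1 / (2 * p)) with hB_def
  have hA : Measurable A := hf.mul (ENNReal.continuous_rpow_const.measurable.comp hc)
  have hB : Measurable B := ENNReal.continuous_rpow_const.measurable.comp hc
  set g : ℝ → ℝ≥0∞ := fun t => f t ^ p * c t ^ (-(1/2) : ℝ) with hg_def
  have hg : Measurable g := (ENNReal.continuous_rpow_const.measurable.comp hf).mul
    (ENNReal.continuous_rpow_const.measurable.comp hc)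
  set k : ℝ → ℝ≥0∞ := fun s => ENNReal.ofReal (b - s) ^ (-(1/2) : ℝ) with hk_def
  have hk : Measurable k := ENNReal.continuous_rpow_const.measurable.comp hc
  set K : ℝ≥0∞ := ENNReal.ofReal ((2 * p / q) ^ (p / q)) with hK_def
  -- pointwise estimate
  have key : ∀ s ∈ Ioo (0:ℝ) b,
      (∫⁻ t in Ioo (0:ℝ) s, f t / c t) ^ p ≤ K * (k s * ∫⁻ t in Ioo (0:ℝ) s, g t) := by
    intro s hs
    have hcprop : ∀ t ∈ Ioo (0:ℝ) s, c t ≠ 0 ∧ c t ≠ ⊤ := by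
      intro t ht
      constructor
      · simp only [hc_def, ne_eq, ENNReal.ofReal_eq_zero, not_le]
        linarith [ht.2, hs.2]
      · exact ENNReal.ofReal_ne_top
    have step1 : ∫⁻ t in Ioo (0:ℝ) s, f t / c t = ∫⁻ t in Ioo (0:ℝ) s, A t * B t := by
      refine setLIntegral_congr_fun measurableSet_Ioo
        (fun t ht => ?_)
      obtain ⟨hc0, hctop⟩ := hcprop t ht
      rw [hA_def, hB_def, mul_assoc, ← ENNReal.rpow_add _ _ hc0 hctop]
      have he : -(1 / (2 * p)) + (-(1 / q) - 1 / (2 * p)) = -1 := by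
        have h1 : p⁻¹ + q⁻¹ = 1 := hpq.inv_add_inv_eq_one
        have h2 : -(1 / (2 * p)) + (-(1 / q) - 1 / (2 * p)) = -(p⁻¹ + q⁻¹) := by
          field_simp
          ring
        rw [h2, h1]
      rw [he, ENNReal.rpow_neg_one, div_eq_mul_inv]
    have step2 := ENNReal.lintegral_mul_le_Lp_mul_Lq (volume.restrict (Ioo (0:ℝ) s)) hpq
      hA.aemeasurable hB.aemeasurable
    simp only [Pi.mul_apply] at step2
    have stepA : ∫⁻ t in Ioo (0:ℝ) s, A t ^ p = ∫⁻ t in Ioo (0:ℝ) s, g t := by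
      refine setLIntegral_congr_fun measurableSet_Ioo
        (fun t ht => ?_)
      rw [hA_def, hg_def, ENNReal.mul_rpow_of_nonneg _ _ hp0.le, ← ENNReal.rpow_mul]
      congr 2
      field_simp
    have stepB : ∫⁻ t in Ioo (0:ℝ) s, B t ^ q ≤ ENNReal.ofReal (δ⁻¹ * (b - s) ^ (-δ)) := by
      have : ∫⁻ t in Ioo (0:ℝ) s, B t ^ q
          = ∫⁻ t in Ioo (0:ℝ) s, ENNReal.ofReal (b - t) ^ (-(1 + δ) : ℝ) := by
        refine setLIntegral_congr_fun measurableSet_Ioo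
          (fun t ht => ?_)
        rw [hB_def, ← ENNReal.rpow_mul]
        congr 1
        rw [hδ_def]
        field_simp
        ring
      rw [this]
      exact calc2 hs.1 hs.2 hδ
    -- raise to power p
    have h3 : (∫⁻ t in Ioo (0:ℝ) s, f t / c t) ^ p
        ≤ ((∫⁻ t in Ioo (0:ℝ) s, g t) ^ (1/p) * (ENNReal.ofReal (δ⁻¹ * (b - s) ^ (-δ))) ^ (1/q)) ^ p := by
      apply ENNReal.rpow_le_rpow _ hp0.le
      rw [step1]
      refine le_trans step2 ?_
      rw [stepA]
      exact mul_le_mul_right (ENNReal.rpow_le_rpow stepB (by positivity)) _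
    refine le_trans h3 ?_
    rw [ENNReal.mul_rpow_of_nonneg _ _ hp0.le, ← ENNReal.rpow_mul, ← ENNReal.rpow_mul,
      one_div_mul_cancel hp0.ne']
    have hYexp : (ENNReal.ofReal (δ⁻¹ * (b - s) ^ (-δ))) ^ (1/q * p) ≤ K * k s := by
      have hbs : (0:ℝ) < b - s := by linarith [hs.2]
      have h1 : ENNReal.ofReal (δ⁻¹ * (b - s) ^ (-δ)) ^ (1/q * p)
          = ENNReal.ofReal ((δ⁻¹ * (b - s) ^ (-δ)) ^ (1/q * p)) := by
        rw [ENNReal.ofReal_rpow_of_pos (by positivity)]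
      rw [h1]
      have h2 : (δ⁻¹ * (b - s) ^ (-δ)) ^ (1/q * p)
          = (2 * p / q) ^ (p / q) * (b - s) ^ (-(1/2) : ℝ) := by
        rw [Real.mul_rpow (by positivity) (by positivity), ← Real.rpow_mul hbs.le]
        congr 1
        · congr 1
          · rw [hδ_def, inv_div]
          · rw [one_div, inv_mul_eq_div]
        · congr 1
          rw [hδ_def]
          field_simp
      rw [h2, ENNReal.ofReal_mul (by positivity), ← ENNReal.ofReal_rpow_of_pos hbs]
    calc (∫⁻ t in Ioo (0:ℝ) s, g t) ^ (1:ℝ) * (ENNReal.ofReal (δ⁻¹ * (b - s) ^ (-δ))) ^ (1/q * p)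
        ≤ (∫⁻ t in Ioo (0:ℝ) s, g t) ^ (1:ℝ) * (K * k s) := mul_le_mul_right hYexp _
      _ = K * (k s * ∫⁻ t in Ioo (0:ℝ) s, g t) := by rw [ENNReal.rpow_one]; ring
  calc ∫⁻ s in Ioo (0:ℝ) b, (∫⁻ t in Ioo (0:ℝ) s, f t / ENNReal.ofReal (b - t)) ^ p
      ≤ ∫⁻ s in Ioo (0:ℝ) b, K * (k s * ∫⁻ t in Ioo (0:ℝ) s, g t) :=
        setLIntegral_mono' measurableSet_Ioo key
    _ = K * ∫⁻ s in Ioo (0:ℝ) b, k s * ∫⁻ t in Ioo (0:ℝ) s, g t :=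
        lintegral_const_mul' _ _ ENNReal.ofReal_ne_top
    _ = K * ∫⁻ t in Ioo (0:ℝ) b, g t * ∫⁻ s in Ioo t b, k s := by rw [swap_helper hk hg b]
    _ = K * ∫⁻ t in Ioo (0:ℝ) b, ENNReal.ofReal 2 * f t ^ p := by
        congr 1
        refine setLIntegral_congr_fun measurableSet_Ioo
          (fun t ht => ?_)
        have hbt : (0:ℝ) < b - t := by linarith [ht.2]
        have hc0 : c t ≠ 0 := by
          simp only [hc_def, ne_eq, ENNReal.ofReal_eq_zero, not_le]; linarith
        rw [hk_def]
        rw [calc1 ht.1.le ht.2]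
        have e1 : ENNReal.ofReal (2 * (b - t) ^ ((1/2):ℝ))
            = ENNReal.ofReal 2 * c t ^ ((1/2):ℝ) := by
          rw [ENNReal.ofReal_mul (by norm_num), ENNReal.ofReal_rpow_of_pos hbt]
        rw [e1, hg_def]
        calc f t ^ p * c t ^ (-(1/2):ℝ) * (ENNReal.ofReal 2 * c t ^ ((1/2):ℝ))
            = ENNReal.ofReal 2 * f t ^ p * (c t ^ (-(1/2):ℝ) * c t ^ ((1/2):ℝ)) := by ring
          _ = ENNReal.ofReal 2 * f t ^ p := by
              rw [← ENNReal.rpow_add _ _ hc0 ENNReal.ofReal_ne_top,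
                show (-(1/2) : ℝ) + 1/2 = 0 by ring, ENNReal.rpow_zero, mul_one]
    _ = ENNReal.ofReal (2 * (2 * p / q) ^ (p / q)) * ∫⁻ t in Ioo (0:ℝ) b, f t ^ p := by
        rw [lintegral_const_mul' _ _ ENNReal.ofReal_ne_top, ← mul_assoc, hK_def,
          ← ENNReal.ofReal_mul (by positivity), mul_comm ((2 * p / q) ^ (p / q)) 2]

lemma tonelli_omega {α : Type*} [MeasureSpace α] [SigmaFinite (volume : Measure α)]
    {B' : Set α} (hB' : MeasurableSet B') {ψ : α → ℝ} (hψ : Measurable ψ)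
    (g : α × ℝ → ℝ≥0∞) (hg : Measurable g) :
    ∫⁻ y in {y : α × ℝ | y.1 ∈ B' ∧ 0 < y.2 ∧ y.2 < ψ y.1}, g y
      = ∫⁻ y' in B', ∫⁻ t in Ioo (0:ℝ) (ψ y'), g (y', t) := by
  have hΩ : MeasurableSet {y : α × ℝ | y.1 ∈ B' ∧ 0 < y.2 ∧ y.2 < ψ y.1} := by
    refine MeasurableSet.inter (measurable_fst hB') ?_
    exact MeasurableSet.inter (measurableSet_lt measurable_const measurable_snd)
      (measurableSet_lt measurable_snd (hψ.comp measurable_fst))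
  rw [← lintegral_indicator hΩ, Measure.volume_eq_prod,
    lintegral_prod _ ((hg.indicator hΩ).aemeasurable)]
  have : ∀ x : α, ∫⁻ y : ℝ, ({y : α × ℝ | y.1 ∈ B' ∧ 0 < y.2 ∧ y.2 < ψ y.1}.indicator g) (x, y)
      = B'.indicator (fun x => ∫⁻ t in Ioo (0:ℝ) (ψ x), g (x, t)) x := by
    intro x
    by_cases hx : x ∈ B'
    · rw [indicator_of_mem hx, ← lintegral_indicator measurableSet_Ioo]
      apply lintegral_congr
      intro y
      by_cases hy : y ∈ Ioo (0:ℝ) (ψ x)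
      · have hmem : ((x, y) : α × ℝ) ∈ {y : α × ℝ | y.1 ∈ B' ∧ 0 < y.2 ∧ y.2 < ψ y.1} :=
          ⟨hx, hy.1, hy.2⟩
        rw [indicator_of_mem hy, indicator_of_mem hmem]
      · rw [indicator_of_notMem hy, indicator_of_notMem (fun h => hy ⟨h.2.1, h.2.2⟩)]
    · rw [indicator_of_notMem hx]
      have : ∀ y : ℝ, ({y : α × ℝ | y.1 ∈ B' ∧ 0 < y.2 ∧ y.2 < ψ y.1}.indicator g) (x, y) = 0 :=
        fun y => indicator_of_notMem (fun h => hx h.1) _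
      simp [this]
  simp only [this]
  rw [lintegral_indicator hB']

/-- Fiberwise dual-Hardy estimate in a subgraph region (used in Theorem 4.5):
for `1 ≤ p < ∞` there is `N = N(p)` such that for any `d ≥ 2`, any measurable
`B' ⊆ ℝ^{d-1}`, any measurable `ψ : B' → (0,∞)` with subgraph region
`Ω = {(y', y^d) : y' ∈ B', 0 < y^d < ψ(y')}`, and any measurable `F` with finite
`L_p(Ω)` norm, the function `W(y', y^d) = ∫_0^{y^d} F(y',t)/(ψ(y') - t) dt`
satisfies `‖W‖_{L_p(Ω)} ≤ N ‖F‖_{L_p(Ω)}`. -/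
theorem fiberwise_dual_hardy (p : ℝ) (hp : 1 ≤ p) :
    ∃ N : ℝ, 0 < N ∧
      ∀ (d : ℕ), 2 ≤ d →
        ∀ (B' : Set (EuclideanSpace ℝ (Fin (d - 1))))
          (ψ : EuclideanSpace ℝ (Fin (d - 1)) → ℝ),
          MeasurableSet B' → Measurable ψ → (∀ y' ∈ B', 0 < ψ y') →
          ∀ (Ω : Set (EuclideanSpace ℝ (Fin (d - 1)) × ℝ)),
            Ω = {y | y.1 ∈ B' ∧ 0 < y.2 ∧ y.2 < ψ y.1} →
            ∀ F : EuclideanSpace ℝ (Fin (d - 1)) × ℝ → ℝ,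
              Measurable F →
              eLpNorm F (ENNReal.ofReal p) (volume.restrict Ω) < ⊤ →
              eLpNorm (fun y => ∫ t in Set.Ioo (0:ℝ) y.2, F (y.1, t) / (ψ y.1 - t))
                  (ENNReal.ofReal p) (volume.restrict Ω)
                ≤ ENNReal.ofReal N * eLpNorm F (ENNReal.ofReal p) (volume.restrict Ω) := by
  have hp0 : (0:ℝ) < p := lt_of_lt_of_le one_pos hp
  obtain ⟨C, hC0, hkey⟩ : ∃ C : ℝ, 0 < C ∧ ∀ b : ℝ, 0 < b → ∀ f : ℝ → ℝ≥0∞, Measurable f →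
      ∫⁻ s in Ioo (0:ℝ) b, (∫⁻ t in Ioo (0:ℝ) s, f t / ENNReal.ofReal (b - t)) ^ p
        ≤ ENNReal.ofReal C * ∫⁻ t in Ioo (0:ℝ) b, f t ^ p := by
    rcases eq_or_lt_of_le hp with hp1 | hp1
    · refine ⟨1, one_pos, fun b hb f hf => ?_⟩
      simp only [← hp1, ENNReal.rpow_one, ENNReal.ofReal_one, one_mul]
      exact hardy_one f hf
    · have hpq := Real.HolderConjugate.conjExponent hp1
      have hq0 : 0 < Real.conjExponent p := hpq.symm.pos
      refine ⟨2 * (2 * p / Real.conjExponent p) ^ (p / Real.conjExponent p), by positivity,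
        fun b hb f hf => ?_⟩
      exact hardy_gt hpq hb f hf
  refine ⟨C ^ (1/p), Real.rpow_pos_of_pos hC0 _, ?_⟩
  intro d _hd B' ψ hB' hψ hψpos Ω hΩ F hF _hFfin
  have hq0 : (ENNReal.ofReal p) ≠ 0 := by
    simp only [ne_eq, ENNReal.ofReal_eq_zero, not_le]; linarith
  have hqt : (ENNReal.ofReal p) ≠ ⊤ := ENNReal.ofReal_ne_top
  rw [eLpNorm_eq_lintegral_rpow_enorm_toReal hq0 hqt, eLpNorm_eq_lintegral_rpow_enorm_toReal hq0 hqt,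
    ENNReal.toReal_ofReal hp0.le]
  have hΩm : MeasurableSet Ω := by
    rw [hΩ]
    exact MeasurableSet.inter (measurable_fst hB') (MeasurableSet.inter
      (measurableSet_lt measurable_const measurable_snd)
      (measurableSet_lt measurable_snd (hψ.comp measurable_fst)))
  set H : EuclideanSpace ℝ (Fin (d - 1)) × ℝ → ℝ≥0∞ := fun y =>
    ∫⁻ t in Ioo (0:ℝ) y.2, (‖F (y.1, t)‖₊ : ℝ≥0∞) / ENNReal.ofReal (ψ y.1 - t) with hH
  have hHm : Measurable H := by
    set G : (EuclideanSpace ℝ (Fin (d - 1)) × ℝ) × ℝ → ℝ≥0∞ := fun z =>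
      ({z : (EuclideanSpace ℝ (Fin (d - 1)) × ℝ) × ℝ | 0 < z.2 ∧ z.2 < z.1.2}.indicator
        (fun z => (‖F (z.1.1, z.2)‖₊ : ℝ≥0∞) / ENNReal.ofReal (ψ z.1.1 - z.2)) z) with hG
    have hGm : Measurable G := by
      refine Measurable.indicator ?_ ?_
      · exact ((hF.comp ((measurable_fst.comp measurable_fst).prodMk measurable_snd)).enorm).div
          (((hψ.comp (measurable_fst.comp measurable_fst)).sub measurable_snd).ennreal_ofReal)
      · exact MeasurableSet.inter (measurableSet_lt measurable_const measurable_snd)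
          (measurableSet_lt measurable_snd (measurable_snd.comp measurable_fst))
    have hmeas : Measurable fun y : EuclideanSpace ℝ (Fin (d - 1)) × ℝ => ∫⁻ t : ℝ, G (y, t) :=
      Measurable.lintegral_prod_right' hGm
    have hfun : H = fun y : EuclideanSpace ℝ (Fin (d - 1)) × ℝ => ∫⁻ t, G (y, t) := by
      funext y
      simp only [hH]
      rw [← lintegral_indicator measurableSet_Ioo]
      apply lintegral_congr
      intro t
      by_cases ht : t ∈ Ioo (0:ℝ) y.2
      · have hmem : ((y, t) : (EuclideanSpace ℝ (Fin (d - 1)) × ℝ) × ℝ) ∈ {z : (EuclideanSpace ℝ (Fin (d - 1)) × ℝ) × ℝ | 0 < z.2 ∧ z.2 < z.1.2} :=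
          ⟨ht.1, ht.2⟩
        rw [indicator_of_mem ht (fun t => (‖F (y.1, t)‖₊ : ℝ≥0∞) / ENNReal.ofReal (ψ y.1 - t))]
        exact (indicator_of_mem hmem
          (fun z => (‖F (z.1.1, z.2)‖₊ : ℝ≥0∞) / ENNReal.ofReal (ψ z.1.1 - z.2))).symm
      · rw [indicator_of_notMem ht (fun t => (‖F (y.1, t)‖₊ : ℝ≥0∞) / ENNReal.ofReal (ψ y.1 - t))]
        have hnm : ((y, t) : (EuclideanSpace ℝ (Fin (d - 1)) × ℝ) × ℝ) ∉
            {z : (EuclideanSpace ℝ (Fin (d - 1)) × ℝ) × ℝ | 0 < z.2 ∧ z.2 < z.1.2} :=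
          fun h => ht ⟨h.1, h.2⟩
        exact (indicator_of_notMem hnm
          (fun z => (‖F (z.1.1, z.2)‖₊ : ℝ≥0∞) / ENNReal.ofReal (ψ z.1.1 - z.2))).symm
    rw [hfun]
    exact hmeas
  have hWH : ∀ y ∈ Ω, (‖∫ t in Ioo (0:ℝ) y.2, F (y.1, t) / (ψ y.1 - t)‖₊ : ℝ≥0∞) ^ p
      ≤ H y ^ p := by
    intro y hy
    rw [hΩ] at hy
    apply ENNReal.rpow_le_rpow _ hp0.le
    refine le_trans (enorm_integral_le_lintegral_enorm _) (le_of_eq ?_)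
    rw [hH]
    refine setLIntegral_congr_fun measurableSet_Ioo (fun t ht => ?_)
    have hψt : 0 < ψ y.1 - t := by
      have := hy.2.2
      have := ht.2
      linarith
    have h1 : (‖F (y.1, t) / (ψ y.1 - t)‖₊ : ℝ≥0∞)
        = (‖F (y.1, t)‖₊ : ℝ≥0∞) / (‖ψ y.1 - t‖₊ : ℝ≥0∞) := by
      rw [nnnorm_div, ENNReal.coe_div (by simp [hψt.ne'])]
    rw [enorm_eq_nnnorm, h1, ← enorm_eq_nnnorm (ψ y.1 - t), Real.enorm_eq_ofReal hψt.le]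
  calc (∫⁻ y in Ω, (‖∫ t in Ioo (0:ℝ) y.2, F (y.1, t) / (ψ y.1 - t)‖₊ : ℝ≥0∞) ^ p) ^ (1/p)
      ≤ (∫⁻ y in Ω, H y ^ p) ^ (1/p) :=
        ENNReal.rpow_le_rpow (setLIntegral_mono' hΩm hWH) (by positivity)
    _ ≤ (ENNReal.ofReal C * ∫⁻ y in Ω, (‖F y‖₊ : ℝ≥0∞) ^ p) ^ (1/p) := by
        apply ENNReal.rpow_le_rpow _ (by positivity)
        rw [hΩ, tonelli_omega hB' hψ (fun y => H y ^ p) (ENNReal.continuous_rpow_const.measurable.comp hHm),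
          tonelli_omega hB' hψ (fun y => (‖F y‖₊ : ℝ≥0∞) ^ p) (ENNReal.continuous_rpow_const.measurable.comp hF.enorm),
          ← lintegral_const_mul' _ _ ENNReal.ofReal_ne_top]
        refine setLIntegral_mono' hB' fun y' hy' => ?_
        have hb := hψpos y' hy'
        have hk := hkey (ψ y') hb (fun t => (‖F (y', t)‖₊ : ℝ≥0∞))
          ((hF.comp measurable_prodMk_left).enorm)
        simpa [hH] using hk
    _ = ENNReal.ofReal (C ^ (1/p)) * (∫⁻ y in Ω, (‖F y‖₊ : ℝ≥0∞) ^ p) ^ (1/p) := by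
        rw [ENNReal.mul_rpow_of_nonneg _ _ (by positivity), ENNReal.ofReal_rpow_of_pos hC0]
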